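/- For even n ≥ 4, ⟨e_j, ω_i⟩ = 0 if and only if i ≡ j + n/2 (mod n) or i ≡ j + n/2 − 1 (mod n), and ⟨e_j, ω_i⟩ = 1 if and only if i ≡ j (mod n) or i ≡ j − 1 (mod n). -/

import Mathlib

open Real

noncomputable def rn (n : ℕ) : ℝ := Real.sqrt (1 / Real.cos (π / n))

noncomputable def ωst (n : ℕ) (i : ℤ) : Fin 3 → ℝ :=
  ![rn n * Real.cos (2 * π * (i : ℝ) / n), rn n * Real.sin (2 * π * (i : ℝ) / n), 1]

noncomputable def eEv (n : ℕ) (j : ℤ) : Fin 3 → ℝ :=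
  ![rn n * Real.cos ((2 * (j : ℝ) - 1) * π / n) / 2,
    rn n * Real.sin ((2 * (j : ℝ) - 1) * π / n) / 2, 1 / 2]

noncomputable def eOd (n : ℕ) (j : ℤ) : Fin 3 → ℝ :=
  (1 / (1 + rn n ^ 2)) •
    ![rn n * Real.cos (2 * π * (j : ℝ) / n), rn n * Real.sin (2 * π * (j : ℝ) / n), 1]

noncomputable def ip (v w : Fin 3 → ℝ) : ℝ := v 0 * w 0 + v 1 * w 1 + v 2 * w 2

noncomputable def uE : Fin 3 → ℝ := ![0, 0, 1]

lemma pi_cancel {a b : ℤ} (h : (a : ℝ) * π = (b : ℝ) * π) : a = b := by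
  have := mul_right_cancel₀ Real.pi_ne_zero h
  exact_mod_cast this

lemma cos_int_eq (n : ℕ) (hn : (n : ℝ) ≠ 0) (a b : ℤ) :
    Real.cos ((a : ℝ) * π / n) = Real.cos ((b : ℝ) * π / n) ↔
      ∃ k : ℤ, b = 2 * k * n + a ∨ b = 2 * k * n - a := by
  rw [Real.cos_eq_cos_iff]
  apply exists_congr
  intro k
  constructor
  · rintro (h | h)
    · left
      apply pi_cancel
      push_cast
      field_simp at h
      ring_nf at h ⊢
      linear_combination π * h
    · right
      apply pi_cancel
      push_cast
      field_simp at h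
      ring_nf at h ⊢
      linear_combination π * h
  · rintro (h | h) <;> subst h <;> [left; right] <;> push_cast <;> field_simp <;> ring

theorem ngon_even_saturation (n : ℕ) (hn : Even n) (h4 : 4 ≤ n) (i j : ℤ) :
    (ip (eEv n j) (ωst n i) = 0 ↔
      (i ≡ j + (n : ℤ) / 2 [ZMOD (n : ℤ)] ∨ i ≡ j + (n : ℤ) / 2 - 1 [ZMOD (n : ℤ)])) ∧
    (ip (eEv n j) (ωst n i) = 1 ↔
      (i ≡ j [ZMOD (n : ℤ)] ∨ i ≡ j - 1 [ZMOD (n : ℤ)])) := by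
  obtain ⟨m, hm⟩ := hn
  have hM : (n : ℤ) = 2 * ((n : ℤ) / 2) := by omega
  set M : ℤ := (n : ℤ) / 2 with hMdef
  have hnR : (n : ℝ) ≠ 0 := Nat.cast_ne_zero.mpr (by omega)
  have hn4R : (4 : ℝ) ≤ (n : ℝ) := by exact_mod_cast h4
  have hc : 0 < Real.cos (π / n) := by
    apply Real.cos_pos_of_mem_Ioo
    constructor
    · have h0 : 0 < π / (n : ℝ) := by positivity
      linarith [pi_pos]
    · have h1 : π / (n : ℝ) ≤ π / 4 := by gcongr
      linarith [pi_pos]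
  have hc' : Real.cos (π / n) ≠ 0 := ne_of_gt hc
  have hr2 : rn n ^ 2 = 1 / Real.cos (π / n) := Real.sq_sqrt (by positivity)
  set A : ℤ := 2 * (i - j) + 1 with hA
  have key : ip (eEv n j) (ωst n i) =
      Real.cos ((A : ℝ) * π / n) / (2 * Real.cos (π / n)) + 1 / 2 := by
    have hb : 2 * π * (i : ℝ) / n - (2 * (j : ℝ) - 1) * π / n = (A : ℝ) * π / n := by
      rw [hA]; push_cast; field_simp; ring
    have hcos := Real.cos_sub (2 * π * (i : ℝ) / n) ((2 * (j : ℝ) - 1) * π / n)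
    rw [hb] at hcos
    simp only [ip, eEv, ωst, Matrix.cons_val_zero, Matrix.cons_val_one, Matrix.head_cons,
      Matrix.cons_val_two, Matrix.tail_cons]
    rw [hcos]
    linear_combination ((Real.cos (2 * π * (i : ℝ) / n) * Real.cos ((2 * (j : ℝ) - 1) * π / n) +
      Real.sin (2 * π * (i : ℝ) / n) * Real.sin ((2 * (j : ℝ) - 1) * π / n)) / 2) * hr2
  constructor
  · rw [key]
    have h0 : Real.cos ((A : ℝ) * π / n) / (2 * Real.cos (π / n)) + 1 / 2 = 0 ↔
        Real.cos ((A : ℝ) * π / n) = Real.cos ((((n : ℤ) - 1 : ℤ) : ℝ) * π / n) := by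
      have hval : Real.cos ((((n : ℤ) - 1 : ℤ) : ℝ) * π / n) = - Real.cos (π / n) := by
        have h2 : (((n : ℤ) - 1 : ℤ) : ℝ) * π / n = π - π / n := by push_cast; field_simp
        rw [h2, Real.cos_pi_sub]
      rw [hval]
      constructor
      · intro h; field_simp at h; linarith
      · intro h; rw [h]; field_simp
        ring
    rw [h0, cos_int_eq n hnR]
    constructor
    · rintro ⟨k, h | h⟩
      · right
        rw [Int.modEq_iff_dvd]
        refine ⟨k, ?_⟩
        rw [hA] at h
        ring_nf at h ⊢
        linarith [hM]
      · left
        rw [Int.modEq_iff_dvd]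
        refine ⟨1 - k, ?_⟩
        rw [hA] at h
        ring_nf at h ⊢
        linarith [hM]
    · rintro (h | h)
      · rw [Int.modEq_iff_dvd] at h
        obtain ⟨k, hk⟩ := h
        refine ⟨1 - k, Or.inr ?_⟩
        rw [hA]
        ring_nf at hk ⊢
        linarith [hM]
      · rw [Int.modEq_iff_dvd] at h
        obtain ⟨k, hk⟩ := h
        refine ⟨k, Or.inl ?_⟩
        rw [hA]
        ring_nf at hk ⊢
        linarith [hM]
  · rw [key]
    have h1 : Real.cos ((A : ℝ) * π / n) / (2 * Real.cos (π / n)) + 1 / 2 = 1 ↔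
        Real.cos ((A : ℝ) * π / n) = Real.cos (((1 : ℤ) : ℝ) * π / n) := by
      have hval : Real.cos (((1 : ℤ) : ℝ) * π / n) = Real.cos (π / n) := by norm_num
      rw [hval]
      constructor
      · intro h; field_simp at h; linarith
      · intro h; rw [h]; field_simp
        ring
    rw [h1, cos_int_eq n hnR]
    constructor
    · rintro ⟨k, h | h⟩
      · left
        rw [Int.modEq_iff_dvd]
        refine ⟨k, ?_⟩
        rw [hA] at h
        ring_nf at h ⊢
        linarith
      · right
        rw [Int.modEq_iff_dvd]
        refine ⟨-k, ?_⟩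
        rw [hA] at h
        ring_nf at h ⊢
        linarith
    · rintro (h | h)
      · rw [Int.modEq_iff_dvd] at h
        obtain ⟨k, hk⟩ := h
        refine ⟨k, Or.inl ?_⟩
        rw [hA]
        ring_nf at hk ⊢
        linarith
      · rw [Int.modEq_iff_dvd] at h
        obtain ⟨k, hk⟩ := h
        refine ⟨-k, Or.inr ?_⟩
        rw [hA]
        ring_nf at hk ⊢
        linarith
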